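/- Uniqueness of marginals of relaxed minimizers: if h_ε and h̃_ε both minimize Iᶜ_ε over {h : 0 ≤ h ≤ h̄}, then ⟨h_ε⟩_x = ⟨h̃_ε⟩_x a.e. and ⟨h_ε⟩_y = ⟨h̃_ε⟩_y a.e. -/

import Mathlib

open MeasureTheory Set


/-- Facts about the first marginal of an admissible density `h` with `0 ≤ h ≤ h̄` a.e. -/
lemma marginal_facts (m n : ℕ) (hbar : (Fin m → ℝ) × (Fin n → ℝ) → ℝ)
    (hbar_meas : Measurable hbar) (hbar_nonneg : ∀ p, 0 ≤ hbar p)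
    (hbar_bdd : ∃ C, ∀ p, hbar p ≤ C) (hbar_supp : HasCompactSupport hbar)
    (h : (Fin m → ℝ) × (Fin n → ℝ) → ℝ) (h_meas : Measurable h)
    (h_bds : ∀ᵐ p, 0 ≤ h p ∧ h p ≤ hbar p) :
    StronglyMeasurable (fun x => ∫ y, h (x, y)) ∧
    Integrable (fun x => (∫ y, h (x, y)) ^ 2) ∧
    (∀ᵐ x, Integrable (fun y => h (x, y))) := by
  obtain ⟨C, hC⟩ := hbar_bdd
  have hC0 : 0 ≤ C := le_trans (hbar_nonneg (0, 0)) (hC (0, 0))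
  set K := tsupport hbar with hKdef
  have hK : IsCompact K := hbar_supp
  have hK2 : IsCompact (Prod.snd '' K) := hK.image continuous_snd
  have hK1 : IsCompact (Prod.fst '' K) := hK.image continuous_fst
  -- integrability of the slices of hbar
  have hbar_slice_int : ∀ x, Integrable (fun y => hbar (x, y)) := by
    intro x
    have hg : Integrable ((Prod.snd '' K).indicator (fun _ => C)) :=
      (integrableOn_const hK2.measure_lt_top.ne).integrable_indicator
        hK2.isClosed.measurableSet
    refine hg.mono' ((hbar_meas.comp (measurable_prodMk_left)).aestronglyMeasurable) ?_
    filter_upwards with y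
    by_cases hy : (x, y) ∈ K
    · have : y ∈ Prod.snd '' K := ⟨(x, y), hy, rfl⟩
      simp only [Set.indicator_of_mem this]
      rw [Real.norm_eq_abs, abs_of_nonneg (hbar_nonneg _)]
      exact hC _
    · have : hbar (x, y) = 0 := image_eq_zero_of_notMem_tsupport hy
      rw [this]
      simp only [norm_zero]
      exact Set.indicator_nonneg (fun _ _ => hC0) y
  set D : ℝ := C * (volume (Prod.snd '' K)).toReal with hDdef
  have hD0 : 0 ≤ D := mul_nonneg hC0 ENNReal.toReal_nonneg
  set H : (Fin m → ℝ) → ℝ := fun x => ∫ y, hbar (x, y) with hHdef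
  have H_nonneg : ∀ x, 0 ≤ H x := fun x => integral_nonneg fun y => hbar_nonneg _
  have H_le : ∀ x, H x ≤ D := by
    intro x
    have hg : Integrable ((Prod.snd '' K).indicator (fun _ => C)) :=
      (integrableOn_const hK2.measure_lt_top.ne).integrable_indicator
        hK2.isClosed.measurableSet
    have : H x ≤ ∫ y, (Prod.snd '' K).indicator (fun _ => C) y := by
      refine integral_mono (hbar_slice_int x) hg ?_
      intro y
      by_cases hy : (x, y) ∈ K
      · have : y ∈ Prod.snd '' K := ⟨(x, y), hy, rfl⟩
        simp only [Set.indicator_of_mem this]; exact hC _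
      · have h0 : hbar (x, y) = 0 := image_eq_zero_of_notMem_tsupport hy
        simp only [h0]
        exact Set.indicator_nonneg (fun _ _ => hC0) y
    calc H x ≤ _ := this
      _ = D := by rw [integral_indicator_const _ hK2.isClosed.measurableSet]; simp [hDdef, mul_comm, Measure.real]
  have H_zero : ∀ x ∉ Prod.fst '' K, H x = 0 := by
    intro x hx
    have : ∀ y, hbar (x, y) = 0 := by
      intro y
      by_contra hne
      exact hx ⟨(x, y), subset_tsupport _ hne, rfl⟩
    simp [hHdef, this]
  have Hsq_int : Integrable (fun x => H x ^ 2) := by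
    have hg : Integrable ((Prod.fst '' K).indicator (fun _ => D ^ 2)) :=
      (integrableOn_const hK1.measure_lt_top.ne).integrable_indicator
        hK1.isClosed.measurableSet
    have Hsm : StronglyMeasurable H := hbar_meas.stronglyMeasurable.integral_prod_right'
    refine hg.mono' ((Hsm.pow 2).aestronglyMeasurable) ?_
    filter_upwards with x
    by_cases hx : x ∈ Prod.fst '' K
    · simp only [Set.indicator_of_mem hx]
      rw [Real.norm_eq_abs, abs_of_nonneg (by positivity)]
      exact pow_le_pow_left₀ (H_nonneg x) (H_le x) 2
    · rw [H_zero x hx]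
      simp only [ne_eq, OfNat.ofNat_ne_zero, not_false_eq_true, zero_pow, norm_zero]
      exact Set.indicator_nonneg (fun _ _ => by positivity) x
  have Asm : StronglyMeasurable (fun x => ∫ y, h (x, y)) :=
    h_meas.stronglyMeasurable.integral_prod_right'
  -- a.e. slice bounds
  have h_bds' : ∀ᵐ x, ∀ᵐ y, 0 ≤ h (x, y) ∧ h (x, y) ≤ hbar (x, y) := by
    rw [Measure.volume_eq_prod] at h_bds
    exact Measure.ae_ae_of_ae_prod h_bds
  have slice_int : ∀ᵐ x, Integrable (fun y => h (x, y)) := by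
    filter_upwards [h_bds'] with x hx
    refine (hbar_slice_int x).mono'
      ((h_meas.comp measurable_prodMk_left).aestronglyMeasurable) ?_
    filter_upwards [hx] with y hy
    rw [Real.norm_eq_abs, abs_of_nonneg hy.1]; exact hy.2
  have A_bds : ∀ᵐ x, 0 ≤ (∫ y, h (x, y)) ∧ (∫ y, h (x, y)) ≤ H x := by
    filter_upwards [h_bds', slice_int] with x hx hxi
    constructor
    · exact integral_nonneg_of_ae (hx.mono fun y hy => hy.1)
    · exact integral_mono_ae hxi (hbar_slice_int x) (hx.mono fun y hy => hy.2)
  have Asq_int : Integrable (fun x => (∫ y, h (x, y)) ^ 2) := by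
    refine Hsq_int.mono' ((Asm.pow 2).aestronglyMeasurable) ?_
    filter_upwards [A_bds] with x hx
    rw [Real.norm_eq_abs, abs_of_nonneg (by positivity)]
    exact pow_le_pow_left₀ hx.1 hx.2 2
  exact ⟨Asm, Asq_int, slice_int⟩


lemma sq_sub_integrable {α : Type*} [MeasurableSpace α] {μ : Measure α} {u v : α → ℝ}
    (hu : AEStronglyMeasurable u μ) (hv : AEStronglyMeasurable v μ)
    (hui : Integrable (fun x => u x ^ 2) μ) (hvi : Integrable (fun x => v x ^ 2) μ) :
    Integrable (fun x => (u x - v x) ^ 2) μ := by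
  refine (((hui.const_mul 2).add (hvi.const_mul 2)).mono'
    (((hu.sub hv).pow 2)) ?_)
  filter_upwards with x
  rw [Real.norm_eq_abs, abs_of_nonneg (by positivity)]
  simp only [Pi.add_apply]
  nlinarith [sq_nonneg (u x + v x)]

lemma cmul_integrable (m n : ℕ) (hbar c : (Fin m → ℝ) × (Fin n → ℝ) → ℝ)
    (hbar_nonneg : ∀ p, 0 ≤ hbar p)
    (hbar_bdd : ∃ C, ∀ p, hbar p ≤ C) (hbar_supp : HasCompactSupport hbar)
    (c_locint : LocallyIntegrable c)
    (h : (Fin m → ℝ) × (Fin n → ℝ) → ℝ) (h_meas : Measurable h)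
    (h_bds : ∀ᵐ p, 0 ≤ h p ∧ h p ≤ hbar p) :
    Integrable (fun p => c p * h p) := by
  obtain ⟨C, hC⟩ := hbar_bdd
  set K := tsupport hbar with hKdef
  have hK : IsCompact K := hbar_supp
  have hg : Integrable (K.indicator (fun p => C * |c p|)) :=
    IntegrableOn.integrable_indicator
      ((c_locint.integrableOn_isCompact hK).norm.const_mul C) hK.isClosed.measurableSet
  refine hg.mono' (c_locint.aestronglyMeasurable.mul h_meas.aestronglyMeasurable) ?_
  filter_upwards [h_bds] with p hp
  by_cases hpK : p ∈ K
  · rw [Set.indicator_of_mem hpK, Real.norm_eq_abs, abs_mul, abs_of_nonneg hp.1, mul_comm]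
    have : h p ≤ C := le_trans hp.2 (hC p)
    exact mul_le_mul_of_nonneg_right (by exact this) (abs_nonneg _) |>.trans_eq rfl
  · have h0 : hbar p = 0 := image_eq_zero_of_notMem_tsupport hpK
    have : h p = 0 := le_antisymm (h0 ▸ hp.2) hp.1
    rw [Set.indicator_of_notMem hpK, this, mul_zero, norm_zero]

lemma ae_swap_mem {α β : Type*} [MeasureSpace α] [MeasureSpace β]
    [SigmaFinite (volume : Measure α)] [SigmaFinite (volume : Measure β)]
    {s : Set (α × β)} (hs : MeasurableSet s)
    (hP : ∀ᵐ p : α × β, p ∈ s) :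
    ∀ᵐ q : β × α, (q.2, q.1) ∈ s := by
  rw [Measure.volume_eq_prod] at hP ⊢
  rw [ae_iff] at hP ⊢
  have hset : {q : β × α | ¬ (q.2, q.1) ∈ s} = Prod.swap ⁻¹' sᶜ := rfl
  rw [hset, ← Measure.prod_swap,
    Measure.map_apply measurable_swap ((hs.compl).preimage measurable_swap)]
  simpa [Set.preimage_preimage] using (show (volume.prod volume) sᶜ = 0 from hP)

lemma quad_split {α : Type*} [MeasurableSpace α] {μ : Measure α} {A B F : α → ℝ}
    (hA : AEStronglyMeasurable A μ) (hB : AEStronglyMeasurable B μ)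
    (hF : AEStronglyMeasurable F μ)
    (hA2 : Integrable (fun x => A x ^ 2) μ) (hB2 : Integrable (fun x => B x ^ 2) μ)
    (hF2 : Integrable (fun x => F x ^ 2) μ) :
    ∫ x, ((A x + B x) / 2 - F x) ^ 2 ∂μ
      = (1/2) * ∫ x, (A x - F x) ^ 2 ∂μ + (1/2) * ∫ x, (B x - F x) ^ 2 ∂μ
        - (1/4) * ∫ x, (A x - B x) ^ 2 ∂μ := by
  have i1 := sq_sub_integrable hA hF hA2 hF2
  have i2 := sq_sub_integrable hB hF hB2 hF2
  have i3 := sq_sub_integrable hA hB hA2 hB2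
  have e : (fun x => ((A x + B x) / 2 - F x) ^ 2)
      = fun x => ((1:ℝ)/2 * (A x - F x)^2 + 1/2 * (B x - F x)^2) - 1/4 * (A x - B x)^2 := by
    funext x; ring
  have j1 : Integrable (fun x => (1:ℝ)/2 * (A x - F x)^2) μ := i1.const_mul _
  have j2 : Integrable (fun x => (1:ℝ)/2 * (B x - F x)^2) μ := i2.const_mul _
  have j3 : Integrable (fun x => (1:ℝ)/4 * (A x - B x)^2) μ := i3.const_mul _
  have j12 : Integrable (fun x => (1:ℝ)/2 * (A x - F x)^2 + (1:ℝ)/2 * (B x - F x)^2) μ := j1.add j2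
  rw [e, integral_sub j12 j3, integral_add j1 j2, integral_const_mul, integral_const_mul, integral_const_mul]


/-- The relaxed (penalized) transport cost
`Iᶜ_ε(h) = ∬ c h + (1/(2ε))‖⟨h⟩ₓ − f‖²_{L²} + (1/(2ε))‖⟨h⟩_y − g‖²_{L²}`. -/
noncomputable def relaxedCost (m n : ℕ) (ε : ℝ)
    (c : (Fin m → ℝ) × (Fin n → ℝ) → ℝ)
    (f : (Fin m → ℝ) → ℝ) (g : (Fin n → ℝ) → ℝ)
    (h : (Fin m → ℝ) × (Fin n → ℝ) → ℝ) : ℝ :=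
  (∫ p, c p * h p)
    + (1 / (2 * ε)) * (∫ x, ((∫ y, h (x, y)) - f x) ^ 2)
    + (1 / (2 * ε)) * (∫ y, ((∫ x, h (x, y)) - g y) ^ 2)

/-- Uniqueness of the marginals of relaxed minimizers: any two minimizers
of `Iᶜ_ε` over `{h : 0 ≤ h ≤ h̄}` have the same `x`- and `y`-marginals a.e. -/
theorem relaxed_marginals_unique (m n : ℕ) (ε : ℝ) (hε : 0 < ε)
    (hbar c : (Fin m → ℝ) × (Fin n → ℝ) → ℝ)
    (f : (Fin m → ℝ) → ℝ) (g : (Fin n → ℝ) → ℝ)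
    (hbar_meas : Measurable hbar) (hbar_nonneg : ∀ p, 0 ≤ hbar p)
    (hbar_bdd : ∃ C, ∀ p, hbar p ≤ C) (hbar_supp : HasCompactSupport hbar)
    (f_meas : Measurable f) (f_nonneg : ∀ x, 0 ≤ f x)
    (f_int : Integrable f) (f_mass : ∫ x, f x = 1)
    (f_sq_int : Integrable (fun x => (f x) ^ 2))
    (g_meas : Measurable g) (g_nonneg : ∀ y, 0 ≤ g y)
    (g_int : Integrable g) (g_mass : ∫ y, g y = 1)
    (g_sq_int : Integrable (fun y => (g y) ^ 2))
    (c_locint : LocallyIntegrable c)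
    (h₁ h₂ : (Fin m → ℝ) × (Fin n → ℝ) → ℝ)
    (h₁_meas : Measurable h₁) (h₂_meas : Measurable h₂)
    (h₁_bds : ∀ᵐ p, 0 ≤ h₁ p ∧ h₁ p ≤ hbar p)
    (h₂_bds : ∀ᵐ p, 0 ≤ h₂ p ∧ h₂ p ≤ hbar p)
    (h₁_min : ∀ h : (Fin m → ℝ) × (Fin n → ℝ) → ℝ, Measurable h →
      (∀ᵐ p, 0 ≤ h p ∧ h p ≤ hbar p) →
      relaxedCost m n ε c f g h₁ ≤ relaxedCost m n ε c f g h)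
    (h₂_min : ∀ h : (Fin m → ℝ) × (Fin n → ℝ) → ℝ, Measurable h →
      (∀ᵐ p, 0 ≤ h p ∧ h p ≤ hbar p) →
      relaxedCost m n ε c f g h₂ ≤ relaxedCost m n ε c f g h) :
    (∀ᵐ x, (∫ y, h₁ (x, y)) = ∫ y, h₂ (x, y)) ∧
      (∀ᵐ y, (∫ x, h₁ (x, y)) = ∫ x, h₂ (x, y)) := by
  have ε8 : (0:ℝ) < 1/(8*ε) := by positivity
  -- the midpoint competitor
  set h₃ : (Fin m → ℝ) × (Fin n → ℝ) → ℝ := fun p => (h₁ p + h₂ p) / 2 with h₃def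
  have h₃_meas : Measurable h₃ := (h₁_meas.add h₂_meas).div_const 2
  have h₃_bds : ∀ᵐ p, 0 ≤ h₃ p ∧ h₃ p ≤ hbar p := by
    filter_upwards [h₁_bds, h₂_bds] with p hp1 hp2
    constructor
    · simp only [h₃def]; linarith [hp1.1, hp2.1]
    · simp only [h₃def]; linarith [hp1.2, hp2.2]
  -- x-marginal facts
  obtain ⟨A₁sm, A₁sq, A₁sl⟩ := marginal_facts m n hbar hbar_meas hbar_nonneg hbar_bdd
    hbar_supp h₁ h₁_meas h₁_bds
  obtain ⟨A₂sm, A₂sq, A₂sl⟩ := marginal_facts m n hbar hbar_meas hbar_nonneg hbar_bdd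
    hbar_supp h₂ h₂_meas h₂_bds
  -- swapped data for the y-marginals
  have hbar'_meas : Measurable (fun q : (Fin n → ℝ) × (Fin m → ℝ) => hbar (q.2, q.1)) :=
    hbar_meas.comp measurable_swap
  have hbar'_supp : HasCompactSupport (fun q : (Fin n → ℝ) × (Fin m → ℝ) => hbar (q.2, q.1)) :=
    hbar_supp.comp_homeomorph (Homeomorph.prodComm (Fin n → ℝ) (Fin m → ℝ))
  have hbar'_bdd : ∃ C, ∀ q : (Fin n → ℝ) × (Fin m → ℝ), hbar (q.2, q.1) ≤ C := by
    obtain ⟨C, hC⟩ := hbar_bdd; exact ⟨C, fun q => hC _⟩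
  have ms : ∀ (h : (Fin m → ℝ) × (Fin n → ℝ) → ℝ), Measurable h →
      MeasurableSet {p | 0 ≤ h p ∧ h p ≤ hbar p} := fun h hm =>
    (measurableSet_le measurable_const hm).inter (measurableSet_le hm hbar_meas)
  have h₁_bds' : ∀ᵐ q : (Fin n → ℝ) × (Fin m → ℝ),
      0 ≤ h₁ (q.2, q.1) ∧ h₁ (q.2, q.1) ≤ hbar (q.2, q.1) :=
    ae_swap_mem (ms h₁ h₁_meas) h₁_bds
  have h₂_bds' : ∀ᵐ q : (Fin n → ℝ) × (Fin m → ℝ),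
      0 ≤ h₂ (q.2, q.1) ∧ h₂ (q.2, q.1) ≤ hbar (q.2, q.1) :=
    ae_swap_mem (ms h₂ h₂_meas) h₂_bds
  obtain ⟨B₁sm', B₁sq', B₁sl'⟩ := marginal_facts n m _ hbar'_meas (fun q => hbar_nonneg _)
    hbar'_bdd hbar'_supp (fun q => h₁ (q.2, q.1)) (h₁_meas.comp measurable_swap) h₁_bds'
  obtain ⟨B₂sm', B₂sq', B₂sl'⟩ := marginal_facts n m _ hbar'_meas (fun q => hbar_nonneg _)
    hbar'_bdd hbar'_supp (fun q => h₂ (q.2, q.1)) (h₂_meas.comp measurable_swap) h₂_bds'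
  have B₁sm : StronglyMeasurable (fun y => ∫ x, h₁ (x, y)) := by simpa using B₁sm'
  have B₂sm : StronglyMeasurable (fun y => ∫ x, h₂ (x, y)) := by simpa using B₂sm'
  have B₁sq : Integrable (fun y => (∫ x, h₁ (x, y)) ^ 2) := by simpa using B₁sq'
  have B₂sq : Integrable (fun y => (∫ x, h₂ (x, y)) ^ 2) := by simpa using B₂sq'
  have B₁sl : ∀ᵐ y, Integrable (fun x => h₁ (x, y)) := by simpa using B₁sl'
  have B₂sl : ∀ᵐ y, Integrable (fun x => h₂ (x, y)) := by simpa using B₂sl'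
  -- linear term
  have c₁ : Integrable (fun p => c p * h₁ p) := cmul_integrable m n hbar c hbar_nonneg
    hbar_bdd hbar_supp c_locint h₁ h₁_meas h₁_bds
  have c₂ : Integrable (fun p => c p * h₂ p) := cmul_integrable m n hbar c hbar_nonneg
    hbar_bdd hbar_supp c_locint h₂ h₂_meas h₂_bds
  have T1 : (∫ p, c p * h₃ p) = ((∫ p, c p * h₁ p) + (∫ p, c p * h₂ p)) / 2 := by
    have e : (fun p => c p * h₃ p) = fun p => (c p * h₁ p + c p * h₂ p) / 2 := by
      funext p; simp only [h₃def]; ring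
    rw [e, integral_div, integral_add c₁ c₂]
  -- quadratic terms
  have T2 : (∫ x, ((∫ y, h₃ (x, y)) - f x) ^ 2)
      = (1/2) * (∫ x, ((∫ y, h₁ (x, y)) - f x) ^ 2)
        + (1/2) * (∫ x, ((∫ y, h₂ (x, y)) - f x) ^ 2)
        - (1/4) * (∫ x, ((∫ y, h₁ (x, y)) - (∫ y, h₂ (x, y))) ^ 2) := by
    have e : ∀ᵐ x, ((∫ y, h₃ (x, y)) - f x) ^ 2
        = (((∫ y, h₁ (x, y)) + (∫ y, h₂ (x, y))) / 2 - f x) ^ 2 := by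
      filter_upwards [A₁sl, A₂sl] with x hx1 hx2
      have : (∫ y, h₃ (x, y)) = ((∫ y, h₁ (x, y)) + (∫ y, h₂ (x, y))) / 2 := by
        simp only [h₃def]
        rw [integral_div, integral_add hx1 hx2]
      rw [this]
    rw [integral_congr_ae e]
    exact quad_split A₁sm.aestronglyMeasurable A₂sm.aestronglyMeasurable
      f_meas.aestronglyMeasurable A₁sq A₂sq f_sq_int
  have T3 : (∫ y, ((∫ x, h₃ (x, y)) - g y) ^ 2)
      = (1/2) * (∫ y, ((∫ x, h₁ (x, y)) - g y) ^ 2)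
        + (1/2) * (∫ y, ((∫ x, h₂ (x, y)) - g y) ^ 2)
        - (1/4) * (∫ y, ((∫ x, h₁ (x, y)) - (∫ x, h₂ (x, y))) ^ 2) := by
    have e : ∀ᵐ y, ((∫ x, h₃ (x, y)) - g y) ^ 2
        = (((∫ x, h₁ (x, y)) + (∫ x, h₂ (x, y))) / 2 - g y) ^ 2 := by
      filter_upwards [B₁sl, B₂sl] with y hy1 hy2
      have : (∫ x, h₃ (x, y)) = ((∫ x, h₁ (x, y)) + (∫ x, h₂ (x, y))) / 2 := by
        simp only [h₃def]
        rw [integral_div, integral_add hy1 hy2]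
      rw [this]
    rw [integral_congr_ae e]
    exact quad_split B₁sm.aestronglyMeasurable B₂sm.aestronglyMeasurable
      g_meas.aestronglyMeasurable B₁sq B₂sq g_sq_int
  -- the key convexity identity
  set Dx := ∫ x, ((∫ y, h₁ (x, y)) - (∫ y, h₂ (x, y))) ^ 2 with hDxdef
  set Dy := ∫ y, ((∫ x, h₁ (x, y)) - (∫ x, h₂ (x, y))) ^ 2 with hDydef
  have key : relaxedCost m n ε c f g h₃
      = (relaxedCost m n ε c f g h₁ + relaxedCost m n ε c f g h₂) / 2
        - (1/(8*ε)) * (Dx + Dy) := by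
    unfold relaxedCost
    rw [T1, T2, T3]
    have hεne : ε ≠ 0 := ne_of_gt hε
    field_simp
    ring
  have E12 : relaxedCost m n ε c f g h₁ = relaxedCost m n ε c f g h₂ :=
    le_antisymm (h₁_min h₂ h₂_meas h₂_bds) (h₂_min h₁ h₁_meas h₁_bds)
  have E13 : relaxedCost m n ε c f g h₁ ≤ relaxedCost m n ε c f g h₃ :=
    h₁_min h₃ h₃_meas h₃_bds
  have hDx0 : 0 ≤ Dx := integral_nonneg fun x => sq_nonneg _
  have hDy0 : 0 ≤ Dy := integral_nonneg fun y => sq_nonneg _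
  have hle : (1/(8*ε)) * (Dx + Dy) ≤ 0 := by linarith
  have hzero : (1/(8*ε)) * (Dx + Dy) = 0 :=
    le_antisymm hle (mul_nonneg (le_of_lt ε8) (add_nonneg hDx0 hDy0))
  have hsum : Dx + Dy = 0 := by
    rcases mul_eq_zero.1 hzero with h | h
    · exact absurd h (ne_of_gt ε8)
    · exact h
  have hDx : Dx = 0 := by linarith
  have hDy : Dy = 0 := by linarith
  have Ix : Integrable (fun x => ((∫ y, h₁ (x, y)) - (∫ y, h₂ (x, y))) ^ 2) :=
    sq_sub_integrable A₁sm.aestronglyMeasurable A₂sm.aestronglyMeasurable A₁sq A₂sq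
  have Iy : Integrable (fun y => ((∫ x, h₁ (x, y)) - (∫ x, h₂ (x, y))) ^ 2) :=
    sq_sub_integrable B₁sm.aestronglyMeasurable B₂sm.aestronglyMeasurable B₁sq B₂sq
  constructor
  · have := (integral_eq_zero_iff_of_nonneg_ae
      (Filter.Eventually.of_forall fun x => sq_nonneg _) Ix).1 hDx
    filter_upwards [this] with x hx
    have hx' : ((∫ y, h₁ (x, y)) - (∫ y, h₂ (x, y))) ^ 2 = 0 := hx
    have := (pow_eq_zero_iff two_ne_zero).1 hx'
    linarith [sub_eq_zero.1 this]
  · have := (integral_eq_zero_iff_of_nonneg_ae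
      (Filter.Eventually.of_forall fun y => sq_nonneg _) Iy).1 hDy
    filter_upwards [this] with y hy
    have hy' : ((∫ x, h₁ (x, y)) - (∫ x, h₂ (x, y))) ^ 2 = 0 := hy
    have := (pow_eq_zero_iff two_ne_zero).1 hy'
    linarith [sub_eq_zero.1 this]
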